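/- Let F_n be the free group of rank n and Γ_r its lower central series. Define 𝔈_r(n) := ker(End(F_n) → End(F_n/Γ_{r+1})). Then for all r ≥ 0 and k ≥ 1, every f ∈ 𝔈_r(n) satisfies f(z)z⁻¹ ∈ Γ_{k+r} for all z ∈ Γ_k. -/

import Mathlib

open Subgroup
open scoped commutatorElement

/-- Three subgroups lemma relative to a normal subgroup. -/
lemma three_subgroups_le {G : Type*} [Group G] {N A B C : Subgroup G} [N.Normal]
    (h1 : ⁅⁅B, C⁆, A⁆ ≤ N) (h2 : ⁅⁅C, A⁆, B⁆ ≤ N) : ⁅⁅A, B⁆, C⁆ ≤ N := by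
  let π := QuotientGroup.mk' N
  have key : ∀ X Y : Subgroup G, ⁅X, Y⁆ ≤ N ↔ ⁅X.map π, Y.map π⁆ = ⊥ := by
    intro X Y
    rw [← Subgroup.map_commutator, Subgroup.map_eq_bot_iff, QuotientGroup.ker_mk']
  rw [key] at h1 h2 ⊢
  rw [Subgroup.map_commutator] at h1 h2 ⊢
  exact Subgroup.commutator_commutator_eq_bot_of_rotate h1 h2

lemma lcs_commutator_le {G : Type*} [Group G] :
    ∀ (j i : ℕ), ⁅Subgroup.lowerCentralSeries (⊤ : Subgroup G) i, Subgroup.lowerCentralSeries (⊤ : Subgroup G) j⁆ ≤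
      Subgroup.lowerCentralSeries (⊤ : Subgroup G) (i + j + 1) := by
  intro j
  induction j with
  | zero =>
    intro i
    rw [Subgroup.lowerCentralSeries_zero]
    exact le_of_eq rfl
  | succ j ih =>
    intro i
    have e : Subgroup.lowerCentralSeries (⊤ : Subgroup G) (j + 1) = ⁅Subgroup.lowerCentralSeries (⊤ : Subgroup G) j, (⊤ : Subgroup G)⁆ := rfl
    rw [e, Subgroup.commutator_comm]
    refine three_subgroups_le ?_ ?_
    · -- ⁅⁅⊤, LCS i⁆, LCS j⁆ ≤ LCS (i + (j+1) + 1)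
      rw [Subgroup.commutator_comm (⊤ : Subgroup G) (Subgroup.lowerCentralSeries (⊤ : Subgroup G) i)]
      have e2 : ⁅Subgroup.lowerCentralSeries (⊤ : Subgroup G) i, (⊤ : Subgroup G)⁆ = Subgroup.lowerCentralSeries (⊤ : Subgroup G) (i + 1) := rfl
      rw [e2]
      have h := ih (i + 1)
      have e3 : i + 1 + j + 1 = i + (j + 1) + 1 := by omega
      rwa [e3] at h
    · -- ⁅⁅LCS i, LCS j⁆, ⊤⁆ ≤ LCS (i + (j+1) + 1)
      have h : ⁅⁅Subgroup.lowerCentralSeries (⊤ : Subgroup G) i, Subgroup.lowerCentralSeries (⊤ : Subgroup G) j⁆, (⊤ : Subgroup G)⁆ ≤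
          ⁅Subgroup.lowerCentralSeries (⊤ : Subgroup G) (i + j + 1), (⊤ : Subgroup G)⁆ :=
        Subgroup.commutator_mono (ih i) le_rfl
      exact h

/-- Pure group computation: if `a` is central, `b` commutes with `p` and with `⁅p,q⁆`,
then `⁅a*p, b*q⁆ = ⁅p,q⁆`. -/
lemma comm_calc {Q : Type*} [Group Q] (a b p q : Q)
    (ha : ∀ x, Commute a x) (hb : Commute b p) (hc : Commute b ⁅p, q⁆) :
    ⁅a * p, b * q⁆ = ⁅p, q⁆ := by
  have expand1 : ∀ x y z : Q, ⁅x * y, z⁆ = x * ⁅y, z⁆ * x⁻¹ * ⁅x, z⁆ := by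
    intro x y z; simp only [commutatorElement_def]; group
  have expand2 : ∀ x y z : Q, ⁅x, y * z⁆ = ⁅x, y⁆ * (y * ⁅x, z⁆ * y⁻¹) := by
    intro x y z; simp only [commutatorElement_def]; group
  calc ⁅a * p, b * q⁆
      = a * ⁅p, b * q⁆ * a⁻¹ * ⁅a, b * q⁆ := expand1 a p (b * q)
    _ = a * ⁅p, b * q⁆ * a⁻¹ := by rw [(ha (b * q)).commutator_eq, mul_one]
    _ = ⁅p, b * q⁆ := by rw [(ha ⁅p, b * q⁆).eq, mul_inv_cancel_right]
    _ = ⁅p, b⁆ * (b * ⁅p, q⁆ * b⁻¹) := expand2 p b q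
    _ = b * ⁅p, q⁆ * b⁻¹ := by rw [hb.symm.commutator_eq, one_mul]
    _ = ⁅p, q⁆ := by rw [hc.eq, mul_inv_cancel_right]

lemma lcs_key {G : Type*} [Group G] (f : G →* G) (r : ℕ)
    (hf : ∀ x : G, f x * x⁻¹ ∈ Subgroup.lowerCentralSeries (⊤ : Subgroup G) r) :
    ∀ (m : ℕ) (z : G), z ∈ Subgroup.lowerCentralSeries (⊤ : Subgroup G) m → f z * z⁻¹ ∈ Subgroup.lowerCentralSeries (⊤ : Subgroup G) (m + r) := by
  intro m
  induction m with
  | zero => intro z _; simpa using hf z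
  | succ m ih =>
    set N := Subgroup.lowerCentralSeries (⊤ : Subgroup G) (m + 1 + r) with hN
    have hNnormal : N.Normal := Subgroup.lowerCentralSeries_normal ⊤ (m + 1 + r)
    intro z hz
    have hz' : z ∈ Subgroup.closure
        { g | ∃ g₁ ∈ Subgroup.lowerCentralSeries (⊤ : Subgroup G) m, ∃ g₂ ∈ (⊤ : Subgroup G), ⁅g₁, g₂⁆ = g } := by
      rw [← Subgroup.commutator_def]; exact hz
    refine Subgroup.closure_induction (p := fun z _ => f z * z⁻¹ ∈ N) ?_ ?_ ?_ ?_ hz'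
    · -- generators
      rintro x ⟨p, hp, q, -, rfl⟩
      rw [← QuotientGroup.ker_mk' N, MonoidHom.mem_ker]
      set π := QuotientGroup.mk' N with hπ
      rw [map_mul, map_inv]
      set α := f p * p⁻¹ with hα
      set β := f q * q⁻¹ with hβ
      have hαmem : α ∈ Subgroup.lowerCentralSeries (⊤ : Subgroup G) (m + r) := ih p hp
      have hβmem : β ∈ Subgroup.lowerCentralSeries (⊤ : Subgroup G) r := hf q
      have hfp : f p = α * p := by rw [hα]; group
      have hfq : f q = β * q := by rw [hβ]; group
      have memN : ∀ w : G, w ∈ N → π w = 1 := by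
        intro w hw
        rwa [hπ, ← MonoidHom.mem_ker, QuotientGroup.ker_mk']
      have hacomm : ∀ x : G ⧸ N, Commute (π α) x := by
        refine fun x => QuotientGroup.induction_on x (fun g => ?_)
        have hmem : ⁅α, g⁆ ∈ N := by
          have h1 : ⁅α, g⁆ ∈ ⁅Subgroup.lowerCentralSeries (⊤ : Subgroup G) (m + r), (⊤ : Subgroup G)⁆ :=
            Subgroup.commutator_mem_commutator hαmem (Subgroup.mem_top g)
          have h2 : ⁅Subgroup.lowerCentralSeries (⊤ : Subgroup G) (m + r), (⊤ : Subgroup G)⁆ =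
              Subgroup.lowerCentralSeries (⊤ : Subgroup G) (m + r + 1) := rfl
          rw [h2] at h1
          have e : m + r + 1 = m + 1 + r := by omega
          rwa [e] at h1
        have h1 := memN _ hmem
        rw [map_commutatorElement] at h1
        exact commutatorElement_eq_one_iff_commute.mp h1
      have hbp : Commute (π β) (π p) := by
        have hmem : ⁅β, p⁆ ∈ N := by
          have h1 : ⁅β, p⁆ ∈ ⁅Subgroup.lowerCentralSeries (⊤ : Subgroup G) r, Subgroup.lowerCentralSeries (⊤ : Subgroup G) m⁆ :=
            Subgroup.commutator_mem_commutator hβmem hp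
          have h2 := lcs_commutator_le (G := G) m r h1
          have e : r + m + 1 = m + 1 + r := by omega
          rwa [e] at h2
        have h1 := memN _ hmem
        rw [map_commutatorElement] at h1
        exact commutatorElement_eq_one_iff_commute.mp h1
      have hbc : Commute (π β) ⁅π p, π q⁆ := by
        have hpq : ⁅p, q⁆ ∈ Subgroup.lowerCentralSeries (⊤ : Subgroup G) (m + 1) := by
          have e : Subgroup.lowerCentralSeries (⊤ : Subgroup G) (m + 1) =
              ⁅Subgroup.lowerCentralSeries (⊤ : Subgroup G) m, (⊤ : Subgroup G)⁆ := rfl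
          rw [e]
          exact Subgroup.commutator_mem_commutator hp (Subgroup.mem_top q)
        have hmem : ⁅β, ⁅p, q⁆⁆ ∈ N := by
          have h1 : ⁅β, ⁅p, q⁆⁆ ∈ ⁅Subgroup.lowerCentralSeries (⊤ : Subgroup G) r, Subgroup.lowerCentralSeries (⊤ : Subgroup G) (m + 1)⁆ :=
            Subgroup.commutator_mem_commutator hβmem hpq
          have h2 := lcs_commutator_le (G := G) (m + 1) r h1
          exact hN ▸ (Subgroup.lowerCentralSeries_antitone (S := (⊤ : Subgroup G)) (by omega)) h2
        have h1 := memN _ hmem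
        rw [map_commutatorElement, map_commutatorElement] at h1
        exact commutatorElement_eq_one_iff_commute.mp h1
      have key : π (f ⁅p, q⁆) = π ⁅p, q⁆ := by
        rw [map_commutatorElement, hfp, hfq]
        calc π ⁅α * p, β * q⁆
            = ⁅π (α * p), π (β * q)⁆ := map_commutatorElement _ _ _
          _ = ⁅π α * π p, π β * π q⁆ := by rw [map_mul π α p, map_mul π β q]
          _ = ⁅π p, π q⁆ := comm_calc (π α) (π β) (π p) (π q) hacomm hbp hbc
          _ = π ⁅p, q⁆ := (map_commutatorElement _ _ _).symm
      rw [key]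
      group
    · simpa using N.one_mem
    · intro x y _ _ hx hy
      have e : f (x * y) * (x * y)⁻¹ = (f x * x⁻¹) * (x * (f y * y⁻¹) * x⁻¹) := by
        rw [map_mul]; group
      rw [e]
      exact mul_mem hx (hNnormal.conj_mem _ hy x)
    · intro x _ hx
      have e : f x⁻¹ * (x⁻¹)⁻¹ = (x⁻¹ * (f x * x⁻¹) * x)⁻¹ := by
        rw [map_inv]; group
      rw [e]
      exact inv_mem (hNnormal.conj_mem' _ hx x)

/-- `Gam G k` is the `k`-th term `Γ_k` of the lower central series of `G`
(with the convention `Γ_1 = G`). -/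
abbrev Gam (G : Type*) [Group G] (k : ℕ) : Subgroup G := Subgroup.lowerCentralSeries (⊤ : Subgroup G) (k - 1)

/-- If `f ∈ 𝔈_r(n)`, i.e. `f(x)x⁻¹ ∈ Γ_{r+1}` for all `x` in the free group `F_n`,
then `f(z)z⁻¹ ∈ Γ_{k+r}` for all `z ∈ Γ_k` and all `k ≥ 1`. -/
theorem stmt1 (n r k : ℕ) (hk : 1 ≤ k)
    (f : FreeGroup (Fin n) →* FreeGroup (Fin n))
    (hf : ∀ x : FreeGroup (Fin n), f x * x⁻¹ ∈ Gam (FreeGroup (Fin n)) (r + 1)) :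
    ∀ z ∈ Gam (FreeGroup (Fin n)) k, f z * z⁻¹ ∈ Gam (FreeGroup (Fin n)) (k + r) := by
  intro z hz
  have hf' : ∀ x : FreeGroup (Fin n), f x * x⁻¹ ∈ Subgroup.lowerCentralSeries (⊤ : Subgroup (FreeGroup (Fin n))) r := by
    simpa [Gam] using hf
  have h := lcs_key f r hf' (k - 1) z hz
  have hidx : k - 1 + r = k + r - 1 := by omega
  rwa [hidx] at h
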